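/- arXiv:1110.1390 — 2 statements merged into one kernel-verified Lean document; each statement's English description precedes it below -/
import Mathlib

section
/- Let Ω be a compact Hausdorff space, Ω⁰ ⊆ Ω a closed subset, n ≥ 1, B a C*-algebra, and ρ : B → C(Ω⁰, M_n) a *-homomorphism. Let R = {(f, b) ∈ C(Ω, M_n) ⊕ B : f|_{Ω⁰} = ρ(b)}, a C*-subalgebra of C(Ω, M_n) ⊕ B. Then every closed two-sided ideal J of R satisfies J = {(f, b) ∈ R : (there exists g ∈ C(Ω, M_n) with (g, b) ∈ J) and f(ω) = 0 for every ω ∈ Ω such that g(ω) = 0 for all (g, c) ∈ J}. -/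
open scoped ContinuousMap

universe u

attribute [local instance] Matrix.normedAddCommGroup Matrix.normedSpace

private lemma aux_matrix_sum {n : ℕ} (m : Matrix (Fin n) (Fin n) ℂ) (j k : Fin n)
    (h : m j k ≠ 0) :
    ∑ i : Fin n, Matrix.single i j ((m j k)⁻¹) * m * Matrix.single k i 1 = 1 := by
  ext a b
  rw [Matrix.sum_apply]
  by_cases hab : a = b
  · subst hab
    rw [Finset.sum_eq_single a]
    · simp [h]
    · intro i _ hia
      simp [Ne.symm hia]
    · simp
  · rw [Finset.sum_eq_zero, Matrix.one_apply_ne hab]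
    intro i _
    by_cases hb : b = i
    · subst hb; simp [hab]
    · simp [hb]

/-- The pullback `R = {(f, b) ∈ C(Ω, Mₙ) ⊕ B : f|_{Ω⁰} = ρ(b)}` of the restriction map
`C(Ω, Mₙ) → C(Ω⁰, Mₙ)` and `ρ : B → C(Ω⁰, Mₙ)`, as a C*-subalgebra of
`C(Ω, Mₙ) ⊕ B`. -/
noncomputable def pullbackAlg (Ω : Type u) [TopologicalSpace Ω] (Ω₀ : Set Ω) (n : ℕ)
    (B : Type u) [NonUnitalNormedRing B] [StarRing B] [CStarRing B] [NormedSpace ℂ B]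
    [IsScalarTower ℂ B B] [SMulCommClass ℂ B B] [StarModule ℂ B] [CompleteSpace B]
    (ρ : B →⋆ₙₐ[ℂ] C(↥Ω₀, Matrix (Fin n) (Fin n) ℂ)) :
    NonUnitalStarSubalgebra ℂ (C(Ω, Matrix (Fin n) (Fin n) ℂ) × B) where
  carrier := {p | ∀ (ω : Ω) (hω : ω ∈ Ω₀), p.1 ω = ρ p.2 ⟨ω, hω⟩}
  add_mem' := by
    intro p q hp hq ω hω
    simp [hp ω hω, hq ω hω]
  zero_mem' := by
    intro ω hω
    simp
  mul_mem' := by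
    intro p q hp hq ω hω
    simp [hp ω hω, hq ω hω]
  smul_mem' := by
    intro c p hp ω hω
    simp [hp ω hω]
  star_mem' := by
    intro p hp ω hω
    simp [hp ω hω, ← ContinuousMap.star_apply, ← map_star]

section Aux

variable (Ω : Type u) [TopologicalSpace Ω] [CompactSpace Ω] [T2Space Ω]
    (Ω₀ : Set Ω) (n : ℕ)
    (B : Type u) [NonUnitalNormedRing B] [StarRing B] [CStarRing B] [NormedSpace ℂ B]
    [IsScalarTower ℂ B B] [SMulCommClass ℂ B B] [StarModule ℂ B] [CompleteSpace B]
    (ρ : B →⋆ₙₐ[ℂ] C(↥Ω₀, Matrix (Fin n) (Fin n) ℂ))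
    (J : TwoSidedIdeal ↥(pullbackAlg Ω Ω₀ n B ρ))

/-- Step A: at any point `ω ∉ Ω₀` where some element of `J` does not vanish, there is an
element of `J` of the form `(χ • 1, 0)` with `χ` real, nonnegative, vanishing on `Ω₀` and
positive at `ω`. -/
private lemma pointwise_elt (hΩ₀ : IsClosed Ω₀) (ω : Ω) (hωΩ₀ : ω ∉ Ω₀)
    (hN : ∃ r ∈ J, ((r : C(Ω, Matrix (Fin n) (Fin n) ℂ) × B)).1 ω ≠ 0) :
    ∃ (P : ↥(pullbackAlg Ω Ω₀ n B ρ)) (χ : C(Ω, ℝ)), P ∈ J ∧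
      ((P : C(Ω, Matrix (Fin n) (Fin n) ℂ) × B)).2 = 0 ∧
      (∀ ω' : Ω, ((P : C(Ω, Matrix (Fin n) (Fin n) ℂ) × B)).1 ω' = ((χ ω' : ℝ) : ℂ) • 1) ∧
      (∀ ω' : Ω, 0 ≤ χ ω') ∧ (∀ ω' ∈ Ω₀, χ ω' = 0) ∧ 0 < χ ω := by
  classical
  obtain ⟨r, hrJ, hrω⟩ := hN
  set g : C(Ω, Matrix (Fin n) (Fin n) ℂ) :=
    ((r : C(Ω, Matrix (Fin n) (Fin n) ℂ) × B)).1 with hg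
  have hjk : ∃ j k, g ω j k ≠ 0 := by
    by_contra hc
    push_neg at hc
    exact hrω (by ext j k; simpa using hc j k)
  obtain ⟨j, k, hjk⟩ := hjk
  obtain ⟨e, he0, he1, he01⟩ := exists_continuous_zero_one_of_isClosed hΩ₀
    isClosed_singleton (Set.disjoint_singleton_right.mpr hωΩ₀)
  have heω : e ω = 1 := he1 rfl
  set L : Fin n → ↥(pullbackAlg Ω Ω₀ n B ρ) := fun i =>
    ⟨(⟨fun ω' => (e ω' : ℂ) • Matrix.single i j ((g ω j k)⁻¹),
        (Complex.continuous_ofReal.comp e.continuous).smul continuous_const⟩, 0),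
      fun ω' hω' => by simp [he0 hω']⟩ with hL
  set Rr : Fin n → ↥(pullbackAlg Ω Ω₀ n B ρ) := fun i =>
    ⟨(⟨fun ω' => (e ω' : ℂ) • Matrix.single k i (1 : ℂ),
        (Complex.continuous_ofReal.comp e.continuous).smul continuous_const⟩, 0),
      fun ω' hω' => by simp [he0 hω']⟩ with hRr
  set T : ↥(pullbackAlg Ω Ω₀ n B ρ) := ∑ i : Fin n, L i * r * Rr i with hT
  have hTJ : T ∈ J := sum_mem fun i _ => J.mul_mem_right _ _ (J.mul_mem_left _ _ hrJ)
  set tt : C(Ω, Matrix (Fin n) (Fin n) ℂ) :=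
    ((T : C(Ω, Matrix (Fin n) (Fin n) ℂ) × B)).1 with htt
  have htω : tt ω = 1 := by
    rw [htt, hT, AddSubmonoidClass.coe_finset_sum, Prod.fst_sum, ContinuousMap.sum_apply]
    have key : ∀ i : Fin n, ((L i * r * Rr i : ↥(pullbackAlg Ω Ω₀ n B ρ)) :
        C(Ω, Matrix (Fin n) (Fin n) ℂ) × B).1 ω
        = Matrix.single i j ((g ω j k)⁻¹) * g ω * Matrix.single k i 1 := by
      intro i
      simp only [MulMemClass.coe_mul, Prod.fst_mul, ContinuousMap.mul_apply, hL, hRr,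
        ContinuousMap.coe_mk, heω, Complex.ofReal_one, one_smul, hg]
    rw [Finset.sum_congr rfl fun i _ => key i]
    exact aux_matrix_sum (g ω) j k hjk
  have hT2 : ((T : C(Ω, Matrix (Fin n) (Fin n) ℂ) × B)).2 = 0 := by
    rw [hT, AddSubmonoidClass.coe_finset_sum, Prod.snd_sum]
    refine Finset.sum_eq_zero fun i _ => ?_
    simp only [MulMemClass.coe_mul, Prod.snd_mul, hL, hRr]
    exact mul_zero _
  set Aj : ↥(pullbackAlg Ω Ω₀ n B ρ) :=
    ⟨(⟨fun ω' => (e ω' : ℂ) • (tt ω').adjugate,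
        (Complex.continuous_ofReal.comp e.continuous).smul tt.continuous.matrix_adjugate⟩, 0),
      fun ω' hω' => by simp [he0 hω']⟩ with hAj
  set D : ↥(pullbackAlg Ω Ω₀ n B ρ) := T * Aj with hD
  have hDJ : D ∈ J := J.mul_mem_right _ _ hTJ
  set μ : C(Ω, ℂ) := ⟨fun ω' => (e ω' : ℂ) * (tt ω').det,
    (Complex.continuous_ofReal.comp e.continuous).mul tt.continuous.matrix_det⟩ with hμ
  have hD1 : ∀ ω' : Ω, ((D : C(Ω, Matrix (Fin n) (Fin n) ℂ) × B)).1 ω' = μ ω' • 1 := by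
    intro ω'
    rw [hD]
    simp only [MulMemClass.coe_mul, Prod.fst_mul, ContinuousMap.mul_apply, hAj,
      ContinuousMap.coe_mk, hμ]
    rw [mul_smul_comm, Matrix.mul_adjugate, smul_smul]
  have hD2 : ((D : C(Ω, Matrix (Fin n) (Fin n) ℂ) × B)).2 = 0 := by
    rw [hD]
    simp only [MulMemClass.coe_mul, Prod.snd_mul, hAj]
    exact mul_zero _
  set P : ↥(pullbackAlg Ω Ω₀ n B ρ) := D * star D with hP
  have hPJ : P ∈ J := J.mul_mem_right _ _ hDJ
  set χ : C(Ω, ℝ) := ⟨fun ω' => Complex.normSq (μ ω'),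
    Complex.continuous_normSq.comp μ.continuous⟩ with hχ
  refine ⟨P, χ, hPJ, ?_, ?_, ?_, ?_, ?_⟩
  · rw [hP]
    simp only [MulMemClass.coe_mul, Prod.snd_mul, hD2]
    exact zero_mul _
  · intro ω'
    have hstar : (((star D : ↥(pullbackAlg Ω Ω₀ n B ρ))) :
        C(Ω, Matrix (Fin n) (Fin n) ℂ) × B).1 ω'
        = star (((D : C(Ω, Matrix (Fin n) (Fin n) ℂ) × B)).1 ω') := by
      simp
    rw [hP]
    simp only [MulMemClass.coe_mul, Prod.fst_mul, ContinuousMap.mul_apply]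
    rw [hstar, hD1, star_smul, star_one, smul_mul_smul_comm, mul_one, Complex.star_def,
      Complex.mul_conj]
    rfl
  · intro ω'
    exact Complex.normSq_nonneg _
  · intro ω' hω'
    have : e ω' = 0 := he0 hω'
    simp [hχ, hμ, this]
  · have : χ ω = 1 := by simp [hχ, hμ, heω, htω]
    rw [this]; exact one_pos

private lemma key_lemma (hΩ₀ : IsClosed Ω₀) (hJ : IsClosed ((J : Set ↥(pullbackAlg Ω Ω₀ n B ρ))))
    (x : ↥(pullbackAlg Ω Ω₀ n B ρ))
    (hx2 : ((x : C(Ω, Matrix (Fin n) (Fin n) ℂ) × B)).2 = 0)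
    (hxvan : ∀ ω : Ω,
      (∀ r ∈ J, ((r : C(Ω, Matrix (Fin n) (Fin n) ℂ) × B)).1 ω = 0) →
      ((x : C(Ω, Matrix (Fin n) (Fin n) ℂ) × B)).1 ω = 0) :
    x ∈ J := by
  classical
  letI : PseudoMetricSpace C(Ω, Matrix (Fin n) (Fin n) ℂ) := ContinuousMap.instPseudoMetricSpace Ω _
  have hclos : x ∈ closure ((J : Set ↥(pullbackAlg Ω Ω₀ n B ρ))) := by
    refine (Metric.mem_closure_iff (α := ↥(pullbackAlg Ω Ω₀ n B ρ))).2 fun ε hε => ?_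
    set h : C(Ω, Matrix (Fin n) (Fin n) ℂ) :=
      ((x : C(Ω, Matrix (Fin n) (Fin n) ℂ) × B)).1 with hh
    have hΩ₀van : ∀ ω ∈ Ω₀, h ω = 0 := by
      intro ω hω
      rw [hh, x.2 ω hω, hx2]
      simp
    set K : Set Ω := {ω | ε / 2 ≤ ‖h ω‖} with hK
    have hKc : IsClosed K := isClosed_le continuous_const (continuous_norm.comp h.continuous)
    have stepA : ∀ ω ∈ K, ∃ (P : ↥(pullbackAlg Ω Ω₀ n B ρ)) (χ : C(Ω, ℝ)), P ∈ J ∧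
        ((P : C(Ω, Matrix (Fin n) (Fin n) ℂ) × B)).2 = 0 ∧
        (∀ ω' : Ω, ((P : C(Ω, Matrix (Fin n) (Fin n) ℂ) × B)).1 ω' = ((χ ω' : ℝ) : ℂ) • 1) ∧
        (∀ ω' : Ω, 0 ≤ χ ω') ∧ (∀ ω' ∈ Ω₀, χ ω' = 0) ∧ 0 < χ ω := by
      intro ω hω
      have hωK : ε / 2 ≤ ‖h ω‖ := hω
      have hhω : h ω ≠ 0 := by
        intro h0
        rw [h0, norm_zero] at hωK
        linarith
      have hωΩ₀ : ω ∉ Ω₀ := fun hc => hhω (hΩ₀van ω hc)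
      have hNω : ∃ r ∈ J, ((r : C(Ω, Matrix (Fin n) (Fin n) ℂ) × B)).1 ω ≠ 0 := by
        by_contra hc
        push_neg at hc
        exact hhω (hxvan ω hc)
      exact pointwise_elt Ω Ω₀ n B ρ J hΩ₀ ω hωΩ₀ hNω
    choose P χ hPJ hP2 hP1 hχ0 hχΩ₀ hχω using stepA
    have hKcomp : IsCompact K := hKc.isCompact
    obtain ⟨s, hs⟩ := hKcomp.elim_finite_subcover
      (fun i : K => {ω' | 0 < χ i.1 i.2 ω'})
      (fun i => isOpen_lt continuous_const (χ i.1 i.2).continuous)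
      (fun ω hω => Set.mem_iUnion.2 ⟨⟨ω, hω⟩, hχω ω hω⟩)
    set σ : C(Ω, ℝ) := ∑ i ∈ s, χ i.1 i.2 with hσ
    set Q : ↥(pullbackAlg Ω Ω₀ n B ρ) := ∑ i ∈ s, P i.1 i.2 with hQ
    have hQJ : Q ∈ J := sum_mem fun i _ => hPJ i.1 i.2
    have hQ1 : ∀ ω' : Ω, ((Q : C(Ω, Matrix (Fin n) (Fin n) ℂ) × B)).1 ω'
        = ((σ ω' : ℝ) : ℂ) • 1 := by
      intro ω'
      rw [hQ, AddSubmonoidClass.coe_finset_sum, Prod.fst_sum, ContinuousMap.sum_apply]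
      rw [Finset.sum_congr rfl fun i _ => hP1 i.1 i.2 ω']
      rw [hσ, ContinuousMap.sum_apply]
      push_cast
      rw [Finset.sum_smul]
    have hQ2 : ((Q : C(Ω, Matrix (Fin n) (Fin n) ℂ) × B)).2 = 0 := by
      rw [hQ, AddSubmonoidClass.coe_finset_sum, Prod.snd_sum]
      exact Finset.sum_eq_zero fun i _ => hP2 i.1 i.2
    have hσ0 : ∀ ω' : Ω, 0 ≤ σ ω' := by
      intro ω'
      rw [hσ, ContinuousMap.sum_apply]
      exact Finset.sum_nonneg fun i _ => hχ0 i.1 i.2 ω'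
    have hσK : ∀ ω' ∈ K, 0 < σ ω' := by
      intro ω' hω'
      obtain ⟨i, his, hlt⟩ : ∃ i ∈ s, 0 < χ i.1 i.2 ω' := by
        have := hs hω'
        simpa using this
      rw [hσ, ContinuousMap.sum_apply]
      exact Finset.sum_pos' (fun i _ => hχ0 i.1 i.2 ω') ⟨i, his, hlt⟩
    have hσΩ₀ : ∀ ω' ∈ Ω₀, σ ω' = 0 := by
      intro ω' hω'
      rw [hσ, ContinuousMap.sum_apply]
      exact Finset.sum_eq_zero fun i _ => hχΩ₀ i.1 i.2 ω' hω'
    set V : Set Ω := {ω' | 0 < σ ω'} with hV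
    have hVo : IsOpen V := isOpen_lt continuous_const σ.continuous
    obtain ⟨W, hWo, hKW, hWV⟩ := normal_exists_closure_subset hKc hVo hσK
    obtain ⟨φ, hφ0, hφ1, hφ01⟩ := exists_continuous_zero_one_of_isClosed
      (isClosed_compl_iff.2 hWo) hKc
      (Set.disjoint_left.2 fun ω' hω' hωK => hω' (hKW hωK))
    have hφσ : ∀ ω' : Ω, σ ω' = 0 → φ ω' = 0 := by
      intro ω' h0
      refine hφ0 fun hW => ?_
      have : ω' ∈ V := hWV (subset_closure hW)
      rw [hV] at this
      simp only [Set.mem_setOf_eq] at this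
      rw [h0] at this
      exact lt_irrefl _ this
    have hθcont : Continuous fun ω' => φ ω' / σ ω' := by
      rw [continuous_iff_continuousAt]
      intro ω'
      by_cases hv : σ ω' = 0
      · have hωW : ω' ∉ closure W := by
          intro hc
          have : ω' ∈ V := hWV hc
          rw [hV] at this
          simp only [Set.mem_setOf_eq] at this
          rw [hv] at this
          exact lt_irrefl _ this
        have hev : (fun ω'' => φ ω'' / σ ω'') =ᶠ[nhds ω'] fun _ => 0 := by
          filter_upwards [isClosed_closure.isOpen_compl.mem_nhds hωW] with z hz
          have hz0 : φ z = 0 := hφ0 fun hzW => hz (subset_closure hzW)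
          rw [hz0, zero_div]
        exact hev.continuousAt
      · exact (φ.continuous.continuousAt).div σ.continuous.continuousAt hv
    set θ : C(Ω, ℝ) := ⟨fun ω' => φ ω' / σ ω', hθcont⟩ with hθ
    have hθΩ₀ : ∀ ω' ∈ Ω₀, θ ω' = 0 := by
      intro ω' hω'
      rw [hθ]
      simp only [ContinuousMap.coe_mk]
      rw [hφσ ω' (hσΩ₀ ω' hω'), zero_div]
    set Θ : ↥(pullbackAlg Ω Ω₀ n B ρ) :=
      ⟨(⟨fun ω' => ((θ ω' : ℝ) : ℂ) • (1 : Matrix (Fin n) (Fin n) ℂ),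
          (Complex.continuous_ofReal.comp θ.continuous).smul continuous_const⟩, 0),
        fun ω' hω' => by simp [hθΩ₀ ω' hω']⟩ with hΘ
    set y : ↥(pullbackAlg Ω Ω₀ n B ρ) := x * (Θ * Q) with hy
    have hyJ : y ∈ J := J.mul_mem_left _ _ (J.mul_mem_left _ _ hQJ)
    refine ⟨y, hyJ, ?_⟩
    have hθσ : ∀ ω' : Ω, θ ω' * σ ω' = φ ω' := by
      intro ω'
      rw [hθ]
      simp only [ContinuousMap.coe_mk]
      by_cases hv : σ ω' = 0
      · rw [hv, mul_zero, hφσ ω' hv]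
      · rw [div_mul_cancel₀ _ hv]
    have hy1 : ∀ ω' : Ω, ((y : C(Ω, Matrix (Fin n) (Fin n) ℂ) × B)).1 ω'
        = ((φ ω' : ℝ) : ℂ) • h ω' := by
      intro ω'
      rw [hy]
      simp only [MulMemClass.coe_mul, Prod.fst_mul, ContinuousMap.mul_apply]
      rw [hQ1]
      have hΘ1 : ((Θ : C(Ω, Matrix (Fin n) (Fin n) ℂ) × B)).1 ω'
          = ((θ ω' : ℝ) : ℂ) • 1 := rfl
      rw [hΘ1, smul_mul_smul_comm, mul_one, mul_smul_comm, mul_one, ← hh]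
      rw [← Complex.ofReal_mul, hθσ]
    have hy2 : ((y : C(Ω, Matrix (Fin n) (Fin n) ℂ) × B)).2 = 0 := by
      rw [hy]
      simp only [MulMemClass.coe_mul, Prod.snd_mul]
      rw [zero_mul, mul_zero]
    rw [Subtype.dist_eq, Prod.dist_eq]
    have hd2 : dist ((x : C(Ω, Matrix (Fin n) (Fin n) ℂ) × B)).2
        ((y : C(Ω, Matrix (Fin n) (Fin n) ℂ) × B)).2 = 0 := by
      rw [hx2, hy2, dist_self]
    have hd1 : dist ((x : C(Ω, Matrix (Fin n) (Fin n) ℂ) × B)).1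
        ((y : C(Ω, Matrix (Fin n) (Fin n) ℂ) × B)).1 ≤ ε / 2 := by
      rw [← hh]
      refine (ContinuousMap.dist_le (by positivity)).2 fun ω' => ?_
      refine (congrArg (dist (h ω')) (hy1 ω')).trans_le ?_
      rw [dist_eq_norm]
      have heq : h ω' - ((φ ω' : ℝ) : ℂ) • h ω' = (((1 - φ ω' : ℝ)) : ℂ) • h ω' := by
        push_cast
        rw [sub_smul, one_smul]
      rw [heq, norm_smul]
      by_cases hK' : ω' ∈ K
      · rw [hφ1 hK']
        norm_num
        positivity
      · have h1 : ‖h ω'‖ ≤ ε / 2 := le_of_not_ge hK'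
        have h2 : ‖(((1 - φ ω' : ℝ)) : ℂ)‖ ≤ 1 := by
          rw [Complex.norm_real, Real.norm_eq_abs, abs_le]
          constructor <;> [linarith [(hφ01 ω').2]; linarith [(hφ01 ω').1]]
        calc ‖(((1 - φ ω' : ℝ)) : ℂ)‖ * ‖h ω'‖ ≤ 1 * (ε / 2) := by
              apply mul_le_mul h2 h1 (norm_nonneg _) zero_le_one
          _ = ε / 2 := one_mul _
    calc max (dist _ _) (dist _ _) ≤ max (ε / 2) 0 := max_le_max hd1 (le_of_eq hd2)
      _ < ε := by rw [max_eq_left (by positivity)]; linarith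
  have := hJ.closure_eq ▸ hclos
  exact this

end Aux

set_option synthInstance.maxHeartbeats 1000000

/-- Let `Ω` be a compact Hausdorff space, `Ω⁰ ⊆ Ω` closed, `n ≥ 1`, `B` a C*-algebra,
`ρ : B → C(Ω⁰, Mₙ)` a *-homomorphism, and `R` the pullback of `ρ` and the restriction
map.  Then every closed two-sided ideal `J` of `R` consists exactly of those
`(f, b) ∈ R` such that `(g, b) ∈ J` for some `g`, and `f(ω) = 0` at every point `ω`
where all first coordinates of elements of `J` vanish. -/
theorem stmt2 (Ω : Type u) [TopologicalSpace Ω] [CompactSpace Ω] [T2Space Ω]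
    (Ω₀ : Set Ω) (hΩ₀ : IsClosed Ω₀) (n : ℕ) (hn : 1 ≤ n)
    (B : Type u) [NonUnitalNormedRing B] [StarRing B] [CStarRing B] [NormedSpace ℂ B]
    [IsScalarTower ℂ B B] [SMulCommClass ℂ B B] [StarModule ℂ B] [CompleteSpace B]
    (ρ : B →⋆ₙₐ[ℂ] C(↥Ω₀, Matrix (Fin n) (Fin n) ℂ))
    (J : TwoSidedIdeal ↥(pullbackAlg Ω Ω₀ n B ρ))
    (hJ : IsClosed ((J : Set ↥(pullbackAlg Ω Ω₀ n B ρ)))) :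
    ∀ p : ↥(pullbackAlg Ω Ω₀ n B ρ), p ∈ J ↔
      ((∃ q ∈ J, ((q : C(Ω, Matrix (Fin n) (Fin n) ℂ) × B)).2
          = ((p : C(Ω, Matrix (Fin n) (Fin n) ℂ) × B)).2) ∧
        ∀ ω : Ω,
          (∀ q ∈ J, ((q : C(Ω, Matrix (Fin n) (Fin n) ℂ) × B)).1 ω = 0) →
          ((p : C(Ω, Matrix (Fin n) (Fin n) ℂ) × B)).1 ω = 0) := by
  intro p
  constructor
  · intro hp
    exact ⟨⟨p, hp, rfl⟩, fun ω hω => hω p hp⟩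
  · rintro ⟨⟨q, hqJ, hq2⟩, hvan⟩
    set x : ↥(pullbackAlg Ω Ω₀ n B ρ) := p - q with hx
    have hx2 : ((x : C(Ω, Matrix (Fin n) (Fin n) ℂ) × B)).2 = 0 := by
      rw [hx]
      rw [AddSubgroupClass.coe_sub, Prod.snd_sub, hq2, sub_self]
    have hxvan : ∀ ω : Ω,
        (∀ r ∈ J, ((r : C(Ω, Matrix (Fin n) (Fin n) ℂ) × B)).1 ω = 0) →
        ((x : C(Ω, Matrix (Fin n) (Fin n) ℂ) × B)).1 ω = 0 := by
      intro ω hω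
      rw [hx, AddSubgroupClass.coe_sub, Prod.fst_sub]
      rw [ContinuousMap.sub_apply, hvan ω hω, hω q hqJ, sub_self]
    have hxJ : x ∈ J := key_lemma Ω Ω₀ n B ρ J hΩ₀ hJ x hx2 hxvan
    have : q + x ∈ J := J.add_mem hqJ hxJ
    have hqx : q + x = p := by rw [hx]; abel
    rwa [hqx] at this
end

section
/- Let S be a Cu-semigroup possessing a greatest element ∞ (i.e., x ≤ ∞ for all x ∈ S), and let e ∈ S be full. Then there exists ℓ ∈ ℕ with e ≪ ℓ·e if and only if e ≪ ∞. -/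
/-- `x` is compactly contained in `y`: for every increasing sequence whose supremum
dominates `y`, some term of the sequence dominates `x`. -/
def IsCC {S : Type*} [Preorder S] (x y : S) : Prop :=
  ∀ f : ℕ → S, Monotone f → ∀ s : S, IsLUB (Set.range f) s → y ≤ s → ∃ n, x ≤ f n

/-- An abstract Cu-semigroup: a positively ordered commutative monoid satisfying the
axioms (P2)-(P5) of the category Cu. -/
class CuSemigroup (S : Type*) extends AddCommMonoid S, PartialOrder S where
  zero_le : ∀ x : S, 0 ≤ x
  add_le_add : ∀ {x₁ y₁ x₂ y₂ : S}, x₁ ≤ y₁ → x₂ ≤ y₂ → x₁ + x₂ ≤ y₁ + y₂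
  exists_sup : ∀ f : ℕ → S, Monotone f → ∃ s : S, IsLUB (Set.range f) s
  exists_cc_seq : ∀ x : S, ∃ f : ℕ → S,
    (∀ n, IsCC (f n) (f (n + 1))) ∧ IsLUB (Set.range f) x
  sup_add_sup : ∀ (f g : ℕ → S), Monotone f → Monotone g → ∀ a b : S,
    IsLUB (Set.range f) a → IsLUB (Set.range g) b →
    IsLUB (Set.range fun n => f n + g n) (a + b)
  cc_add_cc : ∀ {x₁ y₁ x₂ y₂ : S}, IsCC x₁ y₁ → IsCC x₂ y₂ → IsCC (x₁ + x₂) (y₁ + y₂)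

/-- An element `e` of a Cu-semigroup is full if every element compactly contained in
any element is dominated by some multiple of `e`. -/
def CuFull {S : Type*} [CuSemigroup S] (e : S) : Prop :=
  ∀ x x' : S, IsCC x' x → ∃ n : ℕ, x' ≤ n • e

/-- In a Cu-semigroup with a greatest element `∞`, a full element `e` satisfies
`e ≪ ℓ·e` for some `ℓ ∈ ℕ` if and only if `e ≪ ∞`. -/
theorem stmt7 {S : Type*} [CuSemigroup S] (infty : S) (htop : ∀ x : S, x ≤ infty)
    (e : S) (he : CuFull e) :
    (∃ ℓ : ℕ, IsCC e (ℓ • e)) ↔ IsCC e infty := by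
  have mono : ∀ {x' x y y' : S}, x' ≤ x → IsCC x y → y ≤ y' → IsCC x' y' := by
    intro x' x y y' hx hcc hy f hf s hs hys
    obtain ⟨n, hn⟩ := hcc f hf s hs (le_trans hy hys)
    exact ⟨n, le_trans hx hn⟩
  have cc_le : ∀ {x y : S}, IsCC x y → x ≤ y := by
    intro x y hcc
    obtain ⟨n, hn⟩ := hcc (fun _ => y) monotone_const y
      (by simpa using isLUB_singleton) le_rfl
    exact hn
  constructor
  · intro ⟨ℓ, hℓ⟩
    exact mono le_rfl hℓ (htop _)
  · intro hcc
    obtain ⟨f, hf, hlub⟩ := CuSemigroup.exists_cc_seq infty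
    have hmono : Monotone f := monotone_nat_of_le_succ fun n => cc_le (hf n)
    obtain ⟨n, hn⟩ := hcc f hmono infty hlub le_rfl
    obtain ⟨ℓ, hℓ⟩ := he (f (n + 2)) (f (n + 1)) (hf (n + 1))
    exact ⟨ℓ, mono hn (hf n) hℓ⟩
end
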